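/- Let G^1, G^2 ⊂ ℝ³ be the (unique) nonempty compact sets satisfying G^1 = (⋃_{n=1}^{K^{11}} w_n^{11}(G^1)) ∪ (⋃_{n=1}^{K^{12}} w_n^{12}(G^2)) and G^2 = (⋃_{n=1}^{K^{21}} w_n^{21}(G^1)) ∪ (⋃_{n=1}^{K^{22}} w_n^{22}(G^2)). Then there exist continuous vector-valued functions f^1 : [x_0^1, x_N^1] → ℝ² and f^2 : [x_0^2, x_M^2] → ℝ² such that G^1 = {(x, f^1(x)) : x ∈ [x_0^1, x_N^1]}, G^2 = {(x, f^2(x)) : x ∈ [x_0^2, x_M^2]}, f^1(x_n^1) = (y_n^1, z_n^1) for all 0 ≤ n ≤ N, and f^2(x_m^2) = (y_m^2, z_m^2) for all 0 ≤ m ≤ M. -/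

import Mathlib

open Set

private lemma helper_cover (g : ℕ → ℝ) :
    ∀ E : ℕ, 1 ≤ E → (∀ i j, i ≤ j → j ≤ E → g i ≤ g j) →
    ∀ t : ℝ, g 0 ≤ t → t ≤ g E →
    ∃ n, 1 ≤ n ∧ n ≤ E ∧ g (n - 1) ≤ t ∧ t ≤ g n := by
  intro E
  induction E with
  | zero => intro h; omega
  | succ E ih =>
    intro _ hmono t h0 h1
    by_cases hE : E = 0
    · subst hE
      exact ⟨1, le_refl _, le_refl _, by simpa using h0, h1⟩
    · by_cases ht : t ≤ g E
      · obtain ⟨n, hn1, hn2, hn3, hn4⟩ :=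
          ih (by omega) (fun i j hij hj => hmono i j hij (by omega)) t h0 ht
        exact ⟨n, hn1, by omega, hn3, hn4⟩
      · exact ⟨E + 1, by omega, le_refl _, by simpa using (le_of_not_ge ht), h1⟩

private lemma helper_small (k C : ℝ) (hC : 0 < C) (hk1 : k < 1) :
    ∀ ε : ℝ, 0 < ε → ∃ m : ℕ, k ^ m * C < ε := by
  intro ε hε
  obtain ⟨m, hm⟩ := exists_pow_lt_of_lt_one (div_pos hε hC) hk1
  refine ⟨m, ?_⟩
  calc k ^ m * C < (ε / C) * C := mul_lt_mul_of_pos_right hm hC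
    _ = ε := by field_simp

private lemma helper_squeeze (c C k : ℝ) (hc : 0 ≤ c) (hk1 : k < 1)
    (h : ∀ m : ℕ, c ≤ k ^ m * C) : c = 0 := by
  by_contra hne
  have hcpos : 0 < c := lt_of_le_of_ne hc (Ne.symm hne)
  have hC : 0 < C := by have := h 0; simp at this; linarith
  obtain ⟨m, hm⟩ := helper_small k C hC hk1 c hcpos
  linarith [h m]

set_option maxHeartbeats 1000000 in
theorem stmt_12
    (N M : ℕ) (hN : 2 ≤ N) (hM : 2 ≤ M)
    (x1 y1 z1 x2 y2 z2 : ℕ → ℝ)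
    (hx1 : ∀ i, i < N → x1 i < x1 (i + 1))
    (hx2 : ∀ j, j < M → x2 j < x2 (j + 1))
    (hstar1 : ∀ i, 1 ≤ i → i ≤ N → x1 i - x1 (i - 1) < x2 M - x2 0)
    (hstar2 : ∀ j, 1 ≤ j → j ≤ M → x2 j - x2 (j - 1) < x1 N - x1 0)
    (K : Fin 2 → Fin 2 → ℕ)
    (hK1 : K 0 0 + K 0 1 = N) (hK2 : K 1 0 + K 1 1 = M)
    (a b c d e f α β γ : Fin 2 → Fin 2 → ℕ → ℝ)
    (hα : ∀ r s n, 1 ≤ n → n ≤ K r s → |α r s n| < 1)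
    (hγ : ∀ r s n, 1 ≤ n → n ≤ K r s → |γ r s n| < 1)
    (hβγ : ∀ r s n, 1 ≤ n → n ≤ K r s → |β r s n| + |γ r s n| < 1)
    (w : Fin 2 → Fin 2 → ℕ → ℝ × ℝ × ℝ → ℝ × ℝ × ℝ)
    (hw : ∀ r s n p, w r s n p =
      (a r s n * p.1 + b r s n,
       c r s n * p.1 + α r s n * p.2.1 + β r s n * p.2.2 + d r s n,
       e r s n * p.1 + γ r s n * p.2.2 + f r s n))
    (hj11 : ∀ n, 1 ≤ n → n ≤ K 0 0 →
      w 0 0 n (x1 0, y1 0, z1 0) = (x1 (n - 1), y1 (n - 1), z1 (n - 1)) ∧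
      w 0 0 n (x1 N, y1 N, z1 N) = (x1 n, y1 n, z1 n))
    (hj12 : ∀ n, 1 ≤ n → n ≤ K 0 1 →
      w 0 1 n (x2 0, y2 0, z2 0) =
        (x1 (K 0 0 + n - 1), y1 (K 0 0 + n - 1), z1 (K 0 0 + n - 1)) ∧
      w 0 1 n (x2 M, y2 M, z2 M) = (x1 (K 0 0 + n), y1 (K 0 0 + n), z1 (K 0 0 + n)))
    (hj21 : ∀ n, 1 ≤ n → n ≤ K 1 0 →
      w 1 0 n (x1 0, y1 0, z1 0) = (x2 (n - 1), y2 (n - 1), z2 (n - 1)) ∧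
      w 1 0 n (x1 N, y1 N, z1 N) = (x2 n, y2 n, z2 n))
    (hj22 : ∀ n, 1 ≤ n → n ≤ K 1 1 →
      w 1 1 n (x2 0, y2 0, z2 0) =
        (x2 (K 1 0 + n - 1), y2 (K 1 0 + n - 1), z2 (K 1 0 + n - 1)) ∧
      w 1 1 n (x2 M, y2 M, z2 M) = (x2 (K 1 0 + n), y2 (K 1 0 + n), z2 (K 1 0 + n)))
    (G1 G2 : Set (ℝ × ℝ × ℝ))
    (hG1ne : G1.Nonempty) (hG1c : IsCompact G1) (hG2ne : G2.Nonempty) (hG2c : IsCompact G2)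
    (hG1 : G1 = (⋃ n ∈ Set.Icc 1 (K 0 0), w 0 0 n '' G1) ∪ (⋃ n ∈ Set.Icc 1 (K 0 1), w 0 1 n '' G2))
    (hG2 : G2 = (⋃ n ∈ Set.Icc 1 (K 1 0), w 1 0 n '' G1) ∪ (⋃ n ∈ Set.Icc 1 (K 1 1), w 1 1 n '' G2)) :
    ∃ f1 f2 : ℝ → ℝ × ℝ,
      ContinuousOn f1 (Set.Icc (x1 0) (x1 N)) ∧ ContinuousOn f2 (Set.Icc (x2 0) (x2 M)) ∧
      G1 = (fun x => (x, f1 x)) '' Set.Icc (x1 0) (x1 N) ∧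
      G2 = (fun x => (x, f2 x)) '' Set.Icc (x2 0) (x2 M) ∧
      (∀ n, n ≤ N → f1 (x1 n) = (y1 n, z1 n)) ∧
      (∀ m, m ≤ M → f2 (x2 m) = (y2 m, z2 m)) := by
  -- unified notation
  set Xf : Fin 2 → ℕ → ℝ := ![x1, x2] with hXf
  set Yf : Fin 2 → ℕ → ℝ := ![y1, y2] with hYf
  set Zf : Fin 2 → ℕ → ℝ := ![z1, z2] with hZf
  set Nn : Fin 2 → ℕ := ![N, M] with hNn
  set 𝒢 : Fin 2 → Set (ℝ × ℝ × ℝ) := ![G1, G2] with h𝒢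
  set σf : Fin 2 → ℕ → Fin 2 := fun r n => if n ≤ K r 0 then 0 else 1 with hσf
  set μf : Fin 2 → ℕ → ℕ := fun r n => if n ≤ K r 0 then n else n - K r 0 with hμf
  set Wf : Fin 2 → ℕ → ℝ × ℝ × ℝ → ℝ × ℝ × ℝ := fun r n => w r (σf r n) (μf r n) with hWf
  set Aa : Fin 2 → ℕ → ℝ := fun r n => a r (σf r n) (μf r n) with hAa
  set Bb : Fin 2 → ℕ → ℝ := fun r n => b r (σf r n) (μf r n) with hBb
  set Cc : Fin 2 → ℕ → ℝ := fun r n => c r (σf r n) (μf r n) with hCc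
  set Dd : Fin 2 → ℕ → ℝ := fun r n => d r (σf r n) (μf r n) with hDd
  set Ee : Fin 2 → ℕ → ℝ := fun r n => e r (σf r n) (μf r n) with hEe
  set Ff : Fin 2 → ℕ → ℝ := fun r n => f r (σf r n) (μf r n) with hFf
  set Al : Fin 2 → ℕ → ℝ := fun r n => α r (σf r n) (μf r n) with hAl
  set Be : Fin 2 → ℕ → ℝ := fun r n => β r (σf r n) (μf r n) with hBe
  set Ga : Fin 2 → ℕ → ℝ := fun r n => γ r (σf r n) (μf r n) with hGa
  set Lx : Fin 2 → ℕ → ℝ → ℝ := fun r n t => Aa r n * t + Bb r n with hLx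
  set dv : ℝ × ℝ × ℝ → ℝ × ℝ × ℝ → ℝ := fun p q => |p.2.1 - q.2.1| + |p.2.2 - q.2.2| with hdv
  have hXf0 : ∀ i, Xf 0 i = x1 i := fun i => by rw [hXf]; simp
  have hXf1 : ∀ i, Xf 1 i = x2 i := fun i => by rw [hXf]; simp
  have hYf0 : ∀ i, Yf 0 i = y1 i := fun i => by rw [hYf]; simp
  have hYf1 : ∀ i, Yf 1 i = y2 i := fun i => by rw [hYf]; simp
  have hZf0 : ∀ i, Zf 0 i = z1 i := fun i => by rw [hZf]; simp
  have hZf1 : ∀ i, Zf 1 i = z2 i := fun i => by rw [hZf]; simp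
  have hNn0 : Nn 0 = N := by rw [hNn]; simp
  have hNn1 : Nn 1 = M := by rw [hNn]; simp
  have h𝒢0 : 𝒢 0 = G1 := by rw [h𝒢]; simp
  have h𝒢1 : 𝒢 1 = G2 := by rw [h𝒢]; simp
  have hr2 : ∀ r : Fin 2, r = 0 ∨ r = 1 := by decide
  have hNn2 : ∀ r, 2 ≤ Nn r := by
    intro r; rcases hr2 r with rfl | rfl
    · rw [hNn0]; omega
    · rw [hNn1]; omega
  have h𝒢c : ∀ r, IsCompact (𝒢 r) := by
    intro r; rcases hr2 r with rfl | rfl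
    · rw [h𝒢0]; exact hG1c
    · rw [h𝒢1]; exact hG2c
  have h𝒢ne : ∀ r, (𝒢 r).Nonempty := by
    intro r; rcases hr2 r with rfl | rfl
    · rw [h𝒢0]; exact hG1ne
    · rw [h𝒢1]; exact hG2ne
  have hXlt : ∀ (r : Fin 2) i, i < Nn r → Xf r i < Xf r (i + 1) := by
    intro r; rcases hr2 r with rfl | rfl <;> intro i hi
    · rw [hNn0] at hi; rw [hXf0, hXf0]; exact hx1 i hi
    · rw [hNn1] at hi; rw [hXf1, hXf1]; exact hx2 i hi
  have hXle : ∀ (r : Fin 2) i j, i ≤ j → j ≤ Nn r → Xf r i ≤ Xf r j := by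
    intro r i j hij hj
    have key : ∀ k : ℕ, ∀ i : ℕ, i + k ≤ Nn r → Xf r i ≤ Xf r (i + k) := by
      intro k
      induction k with
      | zero => intro i _; simp
      | succ k ih =>
        intro i h
        have h1 := ih i (by omega)
        have h2 := hXlt r (i + k) (by omega)
        have h3 : i + (k + 1) = (i + k) + 1 := by omega
        rw [h3]; linarith
    have := key (j - i) i (by omega)
    rwa [show i + (j - i) = j by omega] at this
  have hXltij : ∀ (r : Fin 2) i j, i < j → j ≤ Nn r → Xf r i < Xf r j := by
    intro r i j hij hj
    have h1 := hXlt r i (by omega)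
    have h2 := hXle r (i + 1) j (by omega) hj
    linarith
  have hXinj : ∀ (r : Fin 2) i j, i ≤ Nn r → j ≤ Nn r → Xf r i = Xf r j → i = j := by
    intro r i j hi hj heq
    by_contra hne
    rcases Nat.lt_or_ge i j with h | h
    · exact absurd heq (ne_of_lt (hXltij r i j h hj))
    · have h' : j < i := by omega
      exact absurd heq.symm (ne_of_lt (hXltij r j i h' hi))
  have hsrc : ∀ s : Fin 2, 0 < Xf s (Nn s) - Xf s 0 := by
    intro s
    have := hXltij s 0 (Nn s) (by have := hNn2 s; omega) (le_refl _)
    linarith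
  have hσμ : ∀ (r : Fin 2) n, 1 ≤ n → n ≤ Nn r → 1 ≤ μf r n ∧ μf r n ≤ K r (σf r n) := by
    intro r n h1 h2
    rcases hr2 r with rfl | rfl
    · rw [hNn0] at h2
      simp only [hμf, hσf]
      by_cases hc : n ≤ K 0 0
      · rw [if_pos hc, if_pos hc]; omega
      · rw [if_neg hc, if_neg hc]; omega
    · rw [hNn1] at h2
      simp only [hμf, hσf]
      by_cases hc : n ≤ K 1 0
      · rw [if_pos hc, if_pos hc]; omega
      · rw [if_neg hc, if_neg hc]; omega
  have hAl1 : ∀ (r : Fin 2) n, 1 ≤ n → n ≤ Nn r → |Al r n| < 1 := by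
    intro r n h1 h2
    obtain ⟨hm1, hm2⟩ := hσμ r n h1 h2
    simp only [hAl]
    exact hα r (σf r n) (μf r n) hm1 hm2
  have hGa1 : ∀ (r : Fin 2) n, 1 ≤ n → n ≤ Nn r → |Ga r n| < 1 := by
    intro r n h1 h2
    obtain ⟨hm1, hm2⟩ := hσμ r n h1 h2
    simp only [hGa]
    exact hγ r (σf r n) (μf r n) hm1 hm2
  have hBeGa1 : ∀ (r : Fin 2) n, 1 ≤ n → n ≤ Nn r → |Be r n| + |Ga r n| < 1 := by
    intro r n h1 h2
    obtain ⟨hm1, hm2⟩ := hσμ r n h1 h2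
    simp only [hBe, hGa]
    exact hβγ r (σf r n) (μf r n) hm1 hm2
  have hWc : ∀ (r : Fin 2) n (p : ℝ × ℝ × ℝ), Wf r n p =
      (Aa r n * p.1 + Bb r n,
       Cc r n * p.1 + Al r n * p.2.1 + Be r n * p.2.2 + Dd r n,
       Ee r n * p.1 + Ga r n * p.2.2 + Ff r n) := by
    intro r n p
    simp only [hWf, hAa, hBb, hCc, hDd, hEe, hFf, hAl, hBe, hGa]
    exact hw _ _ _ _
  have hJ : ∀ (r : Fin 2) n, 1 ≤ n → n ≤ Nn r →
      Wf r n (Xf (σf r n) 0, Yf (σf r n) 0, Zf (σf r n) 0)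
        = (Xf r (n - 1), Yf r (n - 1), Zf r (n - 1)) ∧
      Wf r n (Xf (σf r n) (Nn (σf r n)), Yf (σf r n) (Nn (σf r n)), Zf (σf r n) (Nn (σf r n)))
        = (Xf r n, Yf r n, Zf r n) := by
    intro r n h1 h2
    rcases hr2 r with rfl | rfl
    · rw [hNn0] at h2
      by_cases hc : n ≤ K 0 0
      · have hσ : σf 0 n = 0 := by simp only [hσf]; rw [if_pos hc]
        have hμ : μf 0 n = n := by simp only [hμf]; rw [if_pos hc]
        simp only [hWf, hσ, hμ, hNn0, hXf0, hYf0, hZf0]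
        exact hj11 n h1 hc
      · have hσ : σf 0 n = 1 := by simp only [hσf]; rw [if_neg hc]
        have hμ : μf 0 n = n - K 0 0 := by simp only [hμf]; rw [if_neg hc]
        simp only [hWf, hσ, hμ, hNn1, hXf1, hYf1, hZf1, hXf0, hYf0, hZf0]
        have h := hj12 (n - K 0 0) (by omega) (by omega)
        have e1 : K 0 0 + (n - K 0 0) - 1 = n - 1 := by omega
        have e2 : K 0 0 + (n - K 0 0) = n := by omega
        rw [e1, e2] at h
        exact h
    · rw [hNn1] at h2
      by_cases hc : n ≤ K 1 0
      · have hσ : σf 1 n = 0 := by simp only [hσf]; rw [if_pos hc]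
        have hμ : μf 1 n = n := by simp only [hμf]; rw [if_pos hc]
        simp only [hWf, hσ, hμ, hNn0, hXf0, hYf0, hZf0, hXf1, hYf1, hZf1]
        exact hj21 n h1 hc
      · have hσ : σf 1 n = 1 := by simp only [hσf]; rw [if_neg hc]
        have hμ : μf 1 n = n - K 1 0 := by simp only [hμf]; rw [if_neg hc]
        simp only [hWf, hσ, hμ, hNn1, hXf1, hYf1, hZf1]
        have h := hj22 (n - K 1 0) (by omega) (by omega)
        have e1 : K 1 0 + (n - K 1 0) - 1 = n - 1 := by omega
        have e2 : K 1 0 + (n - K 1 0) = n := by omega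
        rw [e1, e2] at h
        exact h
  have hAB : ∀ (r : Fin 2) n, 1 ≤ n → n ≤ Nn r →
      Lx r n (Xf (σf r n) 0) = Xf r (n - 1) ∧
      Lx r n (Xf (σf r n) (Nn (σf r n))) = Xf r n := by
    intro r n h1 h2
    obtain ⟨hJ1, hJ2⟩ := hJ r n h1 h2
    constructor
    · have h := congrArg Prod.fst hJ1
      rw [hWc] at h
      simpa [hLx] using h
    · have h := congrArg Prod.fst hJ2
      rw [hWc] at h
      simpa [hLx] using h
  have hgap : ∀ (r : Fin 2) n, 1 ≤ n → n ≤ Nn r →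
      Aa r n * (Xf (σf r n) (Nn (σf r n)) - Xf (σf r n) 0) = Xf r n - Xf r (n - 1) := by
    intro r n h1 h2
    obtain ⟨e1, e2⟩ := hAB r n h1 h2
    simp only [hLx] at e1 e2
    linear_combination e2 - e1
  have hApos : ∀ (r : Fin 2) n, 1 ≤ n → n ≤ Nn r → 0 < Aa r n := by
    intro r n h1 h2
    have hg := hgap r n h1 h2
    have hs := hsrc (σf r n)
    have hx := hXltij r (n - 1) n (by omega) h2
    nlinarith
  have sameInt : ∀ (r : Fin 2) n, 1 ≤ n → n ≤ Nn r →
      Xf r n - Xf r (n - 1) < Xf r (Nn r) - Xf r 0 := by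
    intro r n h1 h2
    rcases eq_or_lt_of_le h2 with heq | hlt
    · have h0 : Xf r 0 < Xf r (n - 1) := hXltij r 0 (n - 1) (by have := hNn2 r; omega) (by omega)
      have h3 : Xf r n ≤ Xf r (Nn r) := hXle r n (Nn r) h2 (le_refl _)
      linarith
    · have hn : Xf r n < Xf r (Nn r) := hXltij r n (Nn r) hlt (le_refl _)
      have h3 : Xf r 0 ≤ Xf r (n - 1) := hXle r 0 (n - 1) (by omega) (by omega)
      linarith
  have hgaplt : ∀ (r : Fin 2) n, 1 ≤ n → n ≤ Nn r →
      Xf r n - Xf r (n - 1) < Xf (σf r n) (Nn (σf r n)) - Xf (σf r n) 0 := by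
    intro r n h1 h2
    rcases hr2 r with rfl | rfl
    · by_cases hc : n ≤ K 0 0
      · have hσ : σf 0 n = 0 := by simp only [hσf]; rw [if_pos hc]
        rw [hσ]; exact sameInt 0 n h1 h2
      · have hσ : σf 0 n = 1 := by simp only [hσf]; rw [if_neg hc]
        rw [hσ, hNn1, hXf1, hXf1, hXf0, hXf0]
        rw [hNn0] at h2
        exact hstar1 n h1 h2
    · by_cases hc : n ≤ K 1 0
      · have hσ : σf 1 n = 0 := by simp only [hσf]; rw [if_pos hc]
        rw [hσ, hNn0, hXf0, hXf0, hXf1, hXf1]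
        rw [hNn1] at h2
        exact hstar2 n h1 h2
      · have hσ : σf 1 n = 1 := by simp only [hσf]; rw [if_neg hc]
        rw [hσ]; exact sameInt 1 n h1 h2
  have hAlt1 : ∀ (r : Fin 2) n, 1 ≤ n → n ≤ Nn r → Aa r n < 1 := by
    intro r n h1 h2
    have hg := hgap r n h1 h2
    have hs := hsrc (σf r n)
    have hl := hgaplt r n h1 h2
    nlinarith
  have hLxmem : ∀ (r : Fin 2) n, 1 ≤ n → n ≤ Nn r → ∀ t,
      Xf (σf r n) 0 ≤ t → t ≤ Xf (σf r n) (Nn (σf r n)) →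
      Xf r (n - 1) ≤ Lx r n t ∧ Lx r n t ≤ Xf r n := by
    intro r n h1 h2 t ht1 ht2
    obtain ⟨e1, e2⟩ := hAB r n h1 h2
    have hA := hApos r n h1 h2
    simp only [hLx] at e1 e2 ⊢
    constructor <;> nlinarith
  have hLxinj : ∀ (r : Fin 2) n, 1 ≤ n → n ≤ Nn r → ∀ t u, Lx r n t = Lx r n u → t = u := by
    intro r n h1 h2 t u h
    have hA := hApos r n h1 h2
    simp only [hLx] at h
    have h' : Aa r n * t = Aa r n * u := by linarith
    exact mul_left_cancel₀ (ne_of_gt hA) h'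
  have hW1 : ∀ (r : Fin 2) n (p : ℝ × ℝ × ℝ), (Wf r n p).1 = Lx r n p.1 := by
    intro r n p
    rw [hWc]
  have hGfor : ∀ (r : Fin 2), ∀ p ∈ 𝒢 r, ∃ n, 1 ≤ n ∧ n ≤ Nn r ∧
      ∃ q ∈ 𝒢 (σf r n), p = Wf r n q := by
    intro r p hp
    rcases hr2 r with rfl | rfl
    · rw [h𝒢0, hG1] at hp
      rcases hp with hp | hp
      · simp only [Set.mem_iUnion, Set.mem_Icc, Set.mem_image] at hp
        obtain ⟨n, ⟨hn1, hn2⟩, q, hq, hpq⟩ := hp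
        have hσ : σf 0 n = 0 := by simp only [hσf]; rw [if_pos hn2]
        have hμ : μf 0 n = n := by simp only [hμf]; rw [if_pos hn2]
        refine ⟨n, hn1, by rw [hNn0]; omega, q, ?_, ?_⟩
        · rw [hσ, h𝒢0]; exact hq
        · simp only [hWf, hσ, hμ]; exact hpq.symm
      · simp only [Set.mem_iUnion, Set.mem_Icc, Set.mem_image] at hp
        obtain ⟨n, ⟨hn1, hn2⟩, q, hq, hpq⟩ := hp
        have hc : ¬ (K 0 0 + n ≤ K 0 0) := by omega
        have hσ : σf 0 (K 0 0 + n) = 1 := by simp only [hσf]; rw [if_neg hc]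
        have hμ : μf 0 (K 0 0 + n) = n := by simp only [hμf]; rw [if_neg hc]; omega
        refine ⟨K 0 0 + n, by omega, by rw [hNn0]; omega, q, ?_, ?_⟩
        · rw [hσ, h𝒢1]; exact hq
        · simp only [hWf, hσ, hμ]; exact hpq.symm
    · rw [h𝒢1, hG2] at hp
      rcases hp with hp | hp
      · simp only [Set.mem_iUnion, Set.mem_Icc, Set.mem_image] at hp
        obtain ⟨n, ⟨hn1, hn2⟩, q, hq, hpq⟩ := hp
        have hσ : σf 1 n = 0 := by simp only [hσf]; rw [if_pos hn2]
        have hμ : μf 1 n = n := by simp only [hμf]; rw [if_pos hn2]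
        refine ⟨n, hn1, by rw [hNn1]; omega, q, ?_, ?_⟩
        · rw [hσ, h𝒢0]; exact hq
        · simp only [hWf, hσ, hμ]; exact hpq.symm
      · simp only [Set.mem_iUnion, Set.mem_Icc, Set.mem_image] at hp
        obtain ⟨n, ⟨hn1, hn2⟩, q, hq, hpq⟩ := hp
        have hc : ¬ (K 1 0 + n ≤ K 1 0) := by omega
        have hσ : σf 1 (K 1 0 + n) = 1 := by simp only [hσf]; rw [if_neg hc]
        have hμ : μf 1 (K 1 0 + n) = n := by simp only [hμf]; rw [if_neg hc]; omega
        refine ⟨K 1 0 + n, by omega, by rw [hNn1]; omega, q, ?_, ?_⟩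
        · rw [hσ, h𝒢1]; exact hq
        · simp only [hWf, hσ, hμ]; exact hpq.symm
  have hGback : ∀ (r : Fin 2) n, 1 ≤ n → n ≤ Nn r →
      ∀ q ∈ 𝒢 (σf r n), Wf r n q ∈ 𝒢 r := by
    intro r n h1 h2 q hq
    rcases hr2 r with rfl | rfl
    · rw [hNn0] at h2
      rw [h𝒢0, hG1]
      by_cases hc : n ≤ K 0 0
      · left
        have hσ : σf 0 n = 0 := by simp only [hσf]; rw [if_pos hc]
        have hμ : μf 0 n = n := by simp only [hμf]; rw [if_pos hc]
        rw [hσ, h𝒢0] at hq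
        simp only [Set.mem_iUnion, Set.mem_Icc, Set.mem_image]
        exact ⟨n, ⟨h1, hc⟩, q, hq, by simp only [hWf, hσ, hμ]⟩
      · right
        have hσ : σf 0 n = 1 := by simp only [hσf]; rw [if_neg hc]
        have hμ : μf 0 n = n - K 0 0 := by simp only [hμf]; rw [if_neg hc]
        rw [hσ, h𝒢1] at hq
        simp only [Set.mem_iUnion, Set.mem_Icc, Set.mem_image]
        exact ⟨n - K 0 0, ⟨by omega, by omega⟩, q, hq, by simp only [hWf, hσ, hμ]⟩
    · rw [hNn1] at h2
      rw [h𝒢1, hG2]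
      by_cases hc : n ≤ K 1 0
      · left
        have hσ : σf 1 n = 0 := by simp only [hσf]; rw [if_pos hc]
        have hμ : μf 1 n = n := by simp only [hμf]; rw [if_pos hc]
        rw [hσ, h𝒢0] at hq
        simp only [Set.mem_iUnion, Set.mem_Icc, Set.mem_image]
        exact ⟨n, ⟨h1, hc⟩, q, hq, by simp only [hWf, hσ, hμ]⟩
      · right
        have hσ : σf 1 n = 1 := by simp only [hσf]; rw [if_neg hc]
        have hμ : μf 1 n = n - K 1 0 := by simp only [hμf]; rw [if_neg hc]
        rw [hσ, h𝒢1] at hq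
        simp only [Set.mem_iUnion, Set.mem_Icc, Set.mem_image]
        exact ⟨n - K 1 0, ⟨by omega, by omega⟩, q, hq, by simp only [hWf, hσ, hμ]⟩
  -- global bounds
  obtain ⟨R0, hR0⟩ := (hG1c.isBounded.union hG2c.isBounded).exists_norm_le
  have hRG : ∀ (r : Fin 2), ∀ p ∈ 𝒢 r, ‖p‖ ≤ R0 := by
    intro r p hp
    rcases hr2 r with rfl | rfl
    · rw [h𝒢0] at hp; exact hR0 p (Or.inl hp)
    · rw [h𝒢1] at hp; exact hR0 p (Or.inr hp)
  have hR0nn : 0 ≤ R0 := by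
    obtain ⟨p, hp⟩ := hG1ne
    exact le_trans (norm_nonneg p) (hR0 p (Or.inl hp))
  have hcoord : ∀ p : ℝ × ℝ × ℝ, |p.1| ≤ ‖p‖ ∧ |p.2.1| ≤ ‖p‖ ∧ |p.2.2| ≤ ‖p‖ := by
    intro p
    refine ⟨?_, ?_, ?_⟩
    · simpa using (norm_fst_le p)
    · simpa using (norm_fst_le p.2).trans (norm_snd_le p)
    · simpa using (norm_snd_le p.2).trans (norm_snd_le p)
  have hrangene : (Finset.range (max N M + 1)).Nonempty :=
    Finset.nonempty_range_iff.mpr (Nat.succ_ne_zero _)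
  set Q : ℝ := (Finset.range (max N M + 1)).sup' hrangene
      (fun i => max (|x1 i| + |y1 i| + |z1 i|) (|x2 i| + |y2 i| + |z2 i|)) with hQ
  have hQknot : ∀ (r : Fin 2) i, i ≤ Nn r → |Xf r i| + |Yf r i| + |Zf r i| ≤ Q := by
    intro r i hi
    rcases hr2 r with rfl | rfl
    · rw [hNn0] at hi
      have hmem : i ∈ Finset.range (max N M + 1) := Finset.mem_range.mpr (by omega)
      rw [hXf0, hYf0, hZf0, hQ]
      exact le_trans (le_max_left _ _)
        (Finset.le_sup' (fun i => max (|x1 i| + |y1 i| + |z1 i|) (|x2 i| + |y2 i| + |z2 i|)) hmem)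
    · rw [hNn1] at hi
      have hmem : i ∈ Finset.range (max N M + 1) := Finset.mem_range.mpr (by omega)
      rw [hXf1, hYf1, hZf1, hQ]
      exact le_trans (le_max_right _ _)
        (Finset.le_sup' (fun i => max (|x1 i| + |y1 i| + |z1 i|) (|x2 i| + |y2 i| + |z2 i|)) hmem)
  have hQ0 : 0 ≤ Q := by
    have h := hQknot 0 0 (by omega)
    have h1 := abs_nonneg (Xf 0 0)
    have h2 := abs_nonneg (Yf 0 0)
    have h3 := abs_nonneg (Zf 0 0)
    linarith
  set C1 : ℝ := 4 * R0 + 2 * Q + 1 with hC1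
  have hC1pos : 0 < C1 := by rw [hC1]; linarith
  -- contraction constants
  have hPSnonempty : ((Finset.univ : Finset (Fin 2)) ×ˢ Finset.Icc 1 (max N M)).Nonempty :=
    Finset.Nonempty.product ⟨0, Finset.mem_univ 0⟩ ⟨1, Finset.mem_Icc.mpr (by omega)⟩
  set abar : ℝ := (((Finset.univ : Finset (Fin 2)) ×ˢ Finset.Icc 1 (max N M)).sup' hPSnonempty
      (fun q => if 1 ≤ q.2 ∧ q.2 ≤ Nn q.1 then Aa q.1 q.2 else 1/2)) with habar
  have habar_lt1 : abar < 1 := by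
    rw [habar, Finset.sup'_lt_iff]
    intro q hq
    split_ifs with h
    · exact hAlt1 q.1 q.2 h.1 h.2
    · norm_num
  have hmemPS : ∀ (r : Fin 2) n, 1 ≤ n → n ≤ Nn r →
      (r, n) ∈ ((Finset.univ : Finset (Fin 2)) ×ˢ Finset.Icc 1 (max N M)) := by
    intro r n h1 h2
    rw [Finset.mem_product]
    refine ⟨Finset.mem_univ _, Finset.mem_Icc.mpr ⟨h1, ?_⟩⟩
    rcases hr2 r with rfl | rfl
    · rw [hNn0] at h2; omega
    · rw [hNn1] at h2; omega
  have habar_ge : ∀ (r : Fin 2) n, 1 ≤ n → n ≤ Nn r → Aa r n ≤ abar := by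
    intro r n h1 h2
    have h := Finset.le_sup'
      (f := fun q : Fin 2 × ℕ => if 1 ≤ q.2 ∧ q.2 ≤ Nn q.1 then Aa q.1 q.2 else 1/2)
      (hmemPS r n h1 h2)
    rw [if_pos (show (1 ≤ (r, n).2 ∧ (r, n).2 ≤ Nn (r, n).1) from ⟨h1, h2⟩)] at h
    rw [habar]
    exact h
  have habar_pos : 0 < abar :=
    lt_of_lt_of_le (hApos 0 1 (le_refl _) (by have := hNn2 0; omega))
      (habar_ge 0 1 (le_refl _) (by have := hNn2 0; omega))
  set kbar : ℝ := (((Finset.univ : Finset (Fin 2)) ×ˢ Finset.Icc 1 (max N M)).sup' hPSnonempty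
      (fun q => if 1 ≤ q.2 ∧ q.2 ≤ Nn q.1 then max |Al q.1 q.2| (|Be q.1 q.2| + |Ga q.1 q.2|) else 0)) with hkbar
  have hkbar_lt1 : kbar < 1 := by
    rw [hkbar, Finset.sup'_lt_iff]
    intro q hq
    split_ifs with h
    · exact max_lt (hAl1 q.1 q.2 h.1 h.2) (hBeGa1 q.1 q.2 h.1 h.2)
    · norm_num
  have hkbar_max : ∀ (r : Fin 2) n, 1 ≤ n → n ≤ Nn r →
      max |Al r n| (|Be r n| + |Ga r n|) ≤ kbar := by
    intro r n h1 h2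
    have h := Finset.le_sup'
      (f := fun q : Fin 2 × ℕ => if 1 ≤ q.2 ∧ q.2 ≤ Nn q.1 then max |Al q.1 q.2| (|Be q.1 q.2| + |Ga q.1 q.2|) else 0)
      (hmemPS r n h1 h2)
    rw [if_pos (show (1 ≤ (r, n).2 ∧ (r, n).2 ≤ Nn (r, n).1) from ⟨h1, h2⟩)] at h
    rw [hkbar]
    exact h
  have hkbar_Al : ∀ (r : Fin 2) n, 1 ≤ n → n ≤ Nn r → |Al r n| ≤ kbar :=
    fun r n h1 h2 => le_trans (le_max_left _ _) (hkbar_max r n h1 h2)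
  have hkbar_BG : ∀ (r : Fin 2) n, 1 ≤ n → n ≤ Nn r → |Be r n| + |Ga r n| ≤ kbar :=
    fun r n h1 h2 => le_trans (le_max_right _ _) (hkbar_max r n h1 h2)
  have hkbar_nn : 0 ≤ kbar :=
    le_trans (abs_nonneg (Al 0 1)) (hkbar_Al 0 1 (le_refl _) (by have := hNn2 0; omega))
  -- dv facts
  have hdvnn : ∀ p q : ℝ × ℝ × ℝ, 0 ≤ dv p q := by
    intro p q; rw [hdv]; positivity
  have hdvsymm : ∀ p q : ℝ × ℝ × ℝ, dv p q = dv q p := by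
    intro p q; simp only [hdv]; rw [abs_sub_comm, abs_sub_comm p.2.2]
  have hdveq : ∀ p q : ℝ × ℝ × ℝ, p.1 = q.1 → dv p q = 0 → p = q := by
    rintro ⟨px, py, pz⟩ ⟨qx, qy, qz⟩ h1 h0
    simp only [hdv] at h0
    simp only at h1 h0
    have ha := abs_nonneg (py - qy)
    have hb := abs_nonneg (pz - qz)
    have hy : py = qy := by
      have h2 : |py - qy| = 0 := by linarith
      have := abs_eq_zero.mp h2; linarith
    have hz : pz = qz := by
      have h2 : |pz - qz| = 0 := by linarith
      have := abs_eq_zero.mp h2; linarith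
    simp [h1, hy, hz]
  have hKC : ∀ (r : Fin 2) n, 1 ≤ n → n ≤ Nn r → ∀ p q : ℝ × ℝ × ℝ, p.1 = q.1 →
      dv (Wf r n p) (Wf r n q) ≤ kbar * dv p q := by
    intro r n h1 h2
    rintro ⟨px, py, pz⟩ ⟨qx, qy, qz⟩ hpq
    simp only at hpq
    subst hpq
    rw [hWc, hWc]
    simp only [hdv]
    have hAlk := hkbar_Al r n h1 h2
    have hBGk := hkbar_BG r n h1 h2
    have hstep :
        |Al r n * (py - qy) + Be r n * (pz - qz)| + |Ga r n * (pz - qz)| ≤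
          kbar * (|py - qy| + |pz - qz|) := by
      have t1 : |Al r n * (py - qy) + Be r n * (pz - qz)| ≤
          |Al r n| * |py - qy| + |Be r n| * |pz - qz| := by
        calc |Al r n * (py - qy) + Be r n * (pz - qz)|
            ≤ |Al r n * (py - qy)| + |Be r n * (pz - qz)| := abs_add_le _ _
          _ = |Al r n| * |py - qy| + |Be r n| * |pz - qz| := by rw [abs_mul, abs_mul]
      have t2 : |Ga r n * (pz - qz)| = |Ga r n| * |pz - qz| := abs_mul _ _
      have ha := abs_nonneg (py - qy)
      have hb := abs_nonneg (pz - qz)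
      have hc' := abs_nonneg (Be r n)
      have hd' := abs_nonneg (Ga r n)
      nlinarith
    have e1 : Cc r n * px + Al r n * py + Be r n * pz + Dd r n -
        (Cc r n * px + Al r n * qy + Be r n * qz + Dd r n)
        = Al r n * (py - qy) + Be r n * (pz - qz) := by ring
    have e2 : Ee r n * px + Ga r n * pz + Ff r n - (Ee r n * px + Ga r n * qz + Ff r n)
        = Ga r n * (pz - qz) := by ring
    simpa [e1, e2] using hstep
  -- projections
  set Pp : Fin 2 → Set ℝ := fun r => Prod.fst '' 𝒢 r with hPp
  have hPmem : ∀ (r : Fin 2) (t : ℝ), t ∈ Pp r ↔ ∃ p ∈ 𝒢 r, p.1 = t := by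
    intro r t; simp only [hPp]; simp [Set.mem_image]
  have hPne : ∀ r, (Pp r).Nonempty := by
    intro r; simp only [hPp]; exact (h𝒢ne r).image _
  have hPclosed : ∀ r, IsClosed (Pp r) := by
    intro r; simp only [hPp]; exact ((h𝒢c r).image continuous_fst).isClosed
  have hPbound : ∀ (r : Fin 2), ∀ t ∈ Pp r, |t| ≤ R0 := by
    intro r t ht
    rw [hPmem] at ht
    obtain ⟨p, hp, rfl⟩ := ht
    exact le_trans (hcoord p).1 (hRG r p hp)
  have hPfor : ∀ (r : Fin 2), ∀ t ∈ Pp r, ∃ n, 1 ≤ n ∧ n ≤ Nn r ∧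
      ∃ u ∈ Pp (σf r n), t = Lx r n u := by
    intro r t ht
    rw [hPmem] at ht
    obtain ⟨p, hp, rfl⟩ := ht
    obtain ⟨n, h1, h2, q, hq, hpq⟩ := hGfor r p hp
    refine ⟨n, h1, h2, q.1, (hPmem _ _).mpr ⟨q, hq, rfl⟩, ?_⟩
    rw [hpq, hW1]
  have hPback : ∀ (r : Fin 2) n, 1 ≤ n → n ≤ Nn r →
      ∀ u ∈ Pp (σf r n), Lx r n u ∈ Pp r := by
    intro r n h1 h2 u hu
    rw [hPmem] at hu
    obtain ⟨q, hq, rfl⟩ := hu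
    rw [hPmem]
    exact ⟨Wf r n q, hGback r n h1 h2 q hq, hW1 r n q⟩
  -- knot coordinate bound helper
  have hXQ : ∀ (r : Fin 2) i, i ≤ Nn r → |Xf r i| ≤ Q := by
    intro r i hi
    have h := hQknot r i hi
    have h1 := abs_nonneg (Yf r i)
    have h2 := abs_nonneg (Zf r i)
    linarith
  -- Step 1a : P r ⊆ [X r 0, X r (Nn r)]
  have step1a : ∀ m : ℕ, ∀ (r : Fin 2), ∀ t ∈ Pp r,
      ∃ u ∈ Icc (Xf r 0) (Xf r (Nn r)), |t - u| ≤ abar ^ m * C1 := by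
    intro m
    induction m with
    | zero =>
      intro r t ht
      refine ⟨Xf r 0, ?_, ?_⟩
      · exact ⟨le_refl _, hXle r 0 (Nn r) (by omega) (le_refl _)⟩
      · have h1 := hPbound r t ht
        have h2 := hXQ r 0 (by omega)
        have h3 := abs_sub_abs_le_abs_sub t (Xf r 0)
        have h4 := abs_sub t (Xf r 0)
        rw [pow_zero, one_mul, hC1]
        calc |t - Xf r 0| ≤ |t| + |Xf r 0| := abs_sub _ _
          _ ≤ 4 * R0 + 2 * Q + 1 := by linarith
    | succ m ih =>
      intro r t ht
      obtain ⟨n, h1, h2, u, hu, rfl⟩ := hPfor r t ht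
      obtain ⟨u', hu', hdist⟩ := ih (σf r n) u hu
      refine ⟨Lx r n u', ?_, ?_⟩
      · have hm := hLxmem r n h1 h2 u' hu'.1 hu'.2
        exact ⟨le_trans (hXle r 0 (n - 1) (by omega) (by omega)) hm.1,
               le_trans hm.2 (hXle r n (Nn r) h2 (le_refl _))⟩
      · have hA := hApos r n h1 h2
        have hAle := habar_ge r n h1 h2
        have heq : |Lx r n u - Lx r n u'| = Aa r n * |u - u'| := by
          simp only [hLx]
          rw [show Aa r n * u + Bb r n - (Aa r n * u' + Bb r n) = Aa r n * (u - u') by ring]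
          rw [abs_mul, abs_of_pos hA]
        rw [heq, pow_succ]
        have habs := abs_nonneg (u - u')
        have hpow : (0:ℝ) ≤ abar ^ m * C1 := by positivity
        calc Aa r n * |u - u'| ≤ abar * (abar ^ m * C1) := by nlinarith
          _ = abar ^ m * abar * C1 := by ring
  -- Step 1b : [X r 0, X r (Nn r)] ⊆ closure (P r)
  have step1b : ∀ m : ℕ, ∀ (r : Fin 2), ∀ t ∈ Icc (Xf r 0) (Xf r (Nn r)),
      ∃ p ∈ Pp r, |t - p| ≤ abar ^ m * C1 := by
    intro m
    induction m with
    | zero =>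
      intro r t ht
      obtain ⟨p, hp⟩ := hPne r
      refine ⟨p, hp, ?_⟩
      have h1 := hPbound r p hp
      have h2 := hXQ r 0 (by omega)
      have h3 := hXQ r (Nn r) (le_refl _)
      have h4 : |t| ≤ Q := by
        rw [abs_le]
        rw [abs_le] at h2 h3
        exact ⟨le_trans h2.1 ht.1, le_trans ht.2 h3.2⟩
      rw [pow_zero, one_mul, hC1]
      calc |t - p| ≤ |t| + |p| := abs_sub _ _
        _ ≤ 4 * R0 + 2 * Q + 1 := by linarith
    | succ m ih =>
      intro r t ht
      have hmono : ∀ i j, i ≤ j → j ≤ Nn r → Xf r i ≤ Xf r j := fun i j hij hj => hXle r i j hij hj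
      obtain ⟨n, h1, h2, h3, h4⟩ := helper_cover (Xf r) (Nn r) (by have := hNn2 r; omega) hmono t ht.1 ht.2
      -- invert Lx r n on [X r (n-1), X r n]
      obtain ⟨e1, e2⟩ := hAB r n h1 h2
      have hA := hApos r n h1 h2
      set u : ℝ := (t - Bb r n) / Aa r n with hu
      have hLu : Lx r n u = t := by
        simp only [hLx, hu]; field_simp; ring
      have hu1 : Xf (σf r n) 0 ≤ u := by
        rw [hu]
        simp only [hLx] at e1
        rw [le_div_iff₀ hA]
        nlinarith [h3]
      have hu2 : u ≤ Xf (σf r n) (Nn (σf r n)) := by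
        rw [hu]
        simp only [hLx] at e2
        rw [div_le_iff₀ hA]
        nlinarith [h4]
      obtain ⟨p, hp, hdist⟩ := ih (σf r n) u ⟨hu1, hu2⟩
      refine ⟨Lx r n p, hPback r n h1 h2 p hp, ?_⟩
      have hAle := habar_ge r n h1 h2
      have heq : |t - Lx r n p| = Aa r n * |u - p| := by
        conv_lhs => rw [← hLu]
        simp only [hLx]
        rw [show Aa r n * u + Bb r n - (Aa r n * p + Bb r n) = Aa r n * (u - p) by ring]
        rw [abs_mul, abs_of_pos hA]
      rw [heq, pow_succ]
      have habs := abs_nonneg (u - p)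
      have hpow : (0:ℝ) ≤ abar ^ m * C1 := by positivity
      calc Aa r n * |u - p| ≤ abar * (abar ^ m * C1) := by nlinarith
        _ = abar ^ m * abar * C1 := by ring
  -- conclude : P r = Icc
  have hproj : ∀ (r : Fin 2), Pp r = Icc (Xf r 0) (Xf r (Nn r)) := by
    intro r
    apply Set.eq_of_subset_of_subset
    · intro t ht
      have hcl : t ∈ closure (Icc (Xf r 0) (Xf r (Nn r))) := by
        rw [Metric.mem_closure_iff]
        intro ε hε
        obtain ⟨m, hm⟩ := helper_small abar C1 hC1pos habar_lt1 ε hε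
        obtain ⟨v, hv, hd⟩ := step1a m r t ht
        exact ⟨v, hv, lt_of_le_of_lt (by rw [Real.dist_eq]; exact hd) hm⟩
      rwa [IsClosed.closure_eq isClosed_Icc] at hcl
    · intro t ht
      have hcl : t ∈ closure (Pp r) := by
        rw [Metric.mem_closure_iff]
        intro ε hε
        obtain ⟨m, hm⟩ := helper_small abar C1 hC1pos habar_lt1 ε hε
        obtain ⟨v, hv, hd⟩ := step1b m r t ht
        exact ⟨v, hv, lt_of_le_of_lt (by rw [Real.dist_eq]; exact hd) hm⟩
      rwa [IsClosed.closure_eq (hPclosed r)] at hcl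
  -- endpoint fibers
  set vL : Fin 2 → ℝ × ℝ × ℝ := fun r => (Xf r 0, Yf r 0, Zf r 0) with hvL
  set vR : Fin 2 → ℝ × ℝ × ℝ := fun r => (Xf r (Nn r), Yf r (Nn r), Zf r (Nn r)) with hvR
  have hvL1 : ∀ r, (vL r).1 = Xf r 0 := fun r => by simp [hvL]
  have hvR1 : ∀ r, (vR r).1 = Xf r (Nn r) := fun r => by simp [hvR]
  have hvL2 : ∀ r, (vL r).2.1 = Yf r 0 := fun r => by simp [hvL]
  have hvL3 : ∀ r, (vL r).2.2 = Zf r 0 := fun r => by simp [hvL]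
  have hvR2 : ∀ r, (vR r).2.1 = Yf r (Nn r) := fun r => by simp [hvR]
  have hvR3 : ∀ r, (vR r).2.2 = Zf r (Nn r) := fun r => by simp [hvR]
  have hJL : ∀ (r : Fin 2) n, 1 ≤ n → n ≤ Nn r →
      Wf r n (vL (σf r n)) = (Xf r (n - 1), Yf r (n - 1), Zf r (n - 1)) := by
    intro r n h1 h2; simp only [hvL]; exact (hJ r n h1 h2).1
  have hJR : ∀ (r : Fin 2) n, 1 ≤ n → n ≤ Nn r →
      Wf r n (vR (σf r n)) = (Xf r n, Yf r n, Zf r n) := by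
    intro r n h1 h2; simp only [hvR]; exact (hJ r n h1 h2).2
  have endpt : ∀ m : ℕ, ∀ (r : Fin 2),
      (∀ p ∈ 𝒢 r, p.1 = Xf r 0 → dv p (vL r) ≤ kbar ^ m * C1) ∧
      (∀ p ∈ 𝒢 r, p.1 = Xf r (Nn r) → dv p (vR r) ≤ kbar ^ m * C1) := by
    intro m
    induction m with
    | zero =>
      intro r
      constructor
      · intro p hp _
        have hb1 := (hcoord p).2.1
        have hb2 := (hcoord p).2.2
        have hn := hRG r p hp
        have hq := hQknot r 0 (by omega)
        rw [pow_zero, one_mul, hC1]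
        simp only [hdv, hvL]
        have l1 := abs_sub p.2.1 (Yf r 0)
        have l2 := abs_sub p.2.2 (Zf r 0)
        have l3 := abs_nonneg (Xf r 0)
        linarith
      · intro p hp _
        have hb1 := (hcoord p).2.1
        have hb2 := (hcoord p).2.2
        have hn := hRG r p hp
        have hq := hQknot r (Nn r) (le_refl _)
        rw [pow_zero, one_mul, hC1]
        simp only [hdv, hvR]
        have l1 := abs_sub p.2.1 (Yf r (Nn r))
        have l2 := abs_sub p.2.2 (Zf r (Nn r))
        have l3 := abs_nonneg (Xf r (Nn r))
        linarith
    | succ m ih =>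
      intro r
      constructor
      · intro p hp hx
        obtain ⟨n, h1, h2, q, hq, rfl⟩ := hGfor r p hp
        have hq1 : q.1 ∈ Pp (σf r n) := (hPmem _ _).mpr ⟨q, hq, rfl⟩
        rw [hproj] at hq1
        have hx' : Lx r n q.1 = Xf r 0 := by rw [← hW1 r n q]; exact hx
        have hrange := hLxmem r n h1 h2 q.1 hq1.1 hq1.2
        have hn1 : n = 1 := by
          by_contra hne
          have hge : 1 ≤ n - 1 := by omega
          have hlt := hXltij r 0 (n - 1) (by omega) (by omega)
          rw [hx'] at hrange
          linarith [hrange.1]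
        subst hn1
        have hq0 : q.1 = Xf (σf r 1) 0 := by
          apply hLxinj r 1 h1 h2
          have e0 : (1:ℕ) - 1 = 0 := rfl
          rw [hx', (hAB r 1 h1 h2).1, e0]
        have hIH := (ih (σf r 1)).1 q hq hq0
        have hvv : Wf r 1 (vL (σf r 1)) = vL r := by
          have e0 : (1:ℕ) - 1 = 0 := rfl
          rw [hJL r 1 h1 h2, e0]
        calc dv (Wf r 1 q) (vL r) = dv (Wf r 1 q) (Wf r 1 (vL (σf r 1))) := by rw [hvv]
          _ ≤ kbar * dv q (vL (σf r 1)) := hKC r 1 h1 h2 q _ (by rw [hq0, hvL1])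
          _ ≤ kbar * (kbar ^ m * C1) := mul_le_mul_of_nonneg_left hIH hkbar_nn
          _ = kbar ^ (m + 1) * C1 := by ring
      · intro p hp hx
        obtain ⟨n, h1, h2, q, hq, rfl⟩ := hGfor r p hp
        have hq1 : q.1 ∈ Pp (σf r n) := (hPmem _ _).mpr ⟨q, hq, rfl⟩
        rw [hproj] at hq1
        have hx' : Lx r n q.1 = Xf r (Nn r) := by rw [← hW1 r n q]; exact hx
        have hrange := hLxmem r n h1 h2 q.1 hq1.1 hq1.2
        have hn1 : n = Nn r := by
          by_contra hne
          have hlt := hXltij r n (Nn r) (by omega) (le_refl _)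
          rw [hx'] at hrange
          linarith [hrange.2]
        subst hn1
        have hq0 : q.1 = Xf (σf r (Nn r)) (Nn (σf r (Nn r))) := by
          apply hLxinj r (Nn r) h1 h2
          rw [hx', (hAB r (Nn r) h1 h2).2]
        have hIH := (ih (σf r (Nn r))).2 q hq hq0
        have hvv : Wf r (Nn r) (vR (σf r (Nn r))) = vR r := by
          rw [hJR r (Nn r) h1 h2]
        calc dv (Wf r (Nn r) q) (vR r)
            = dv (Wf r (Nn r) q) (Wf r (Nn r) (vR (σf r (Nn r)))) := by rw [hvv]
          _ ≤ kbar * dv q (vR (σf r (Nn r))) := hKC r (Nn r) h1 h2 q _ (by rw [hq0, hvR1])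
          _ ≤ kbar * (kbar ^ m * C1) := mul_le_mul_of_nonneg_left hIH hkbar_nn
          _ = kbar ^ (m + 1) * C1 := by ring
  have hendL : ∀ (r : Fin 2), ∀ p ∈ 𝒢 r, p.1 = Xf r 0 → p = vL r := by
    intro r p hp hx
    have h0 : dv p (vL r) = 0 :=
      helper_squeeze _ C1 kbar (hdvnn _ _) hkbar_lt1 (fun m => (endpt m r).1 p hp hx)
    exact hdveq p (vL r) (by rw [hx, hvL1]) h0
  have hendR : ∀ (r : Fin 2), ∀ p ∈ 𝒢 r, p.1 = Xf r (Nn r) → p = vR r := by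
    intro r p hp hx
    have h0 : dv p (vR r) = 0 :=
      helper_squeeze _ C1 kbar (hdvnn _ _) hkbar_lt1 (fun m => (endpt m r).2 p hp hx)
    exact hdveq p (vR r) (by rw [hx, hvR1]) h0
  -- all fibers singletons
  have hdvself : ∀ pp : ℝ × ℝ × ℝ, dv pp pp = 0 := by intro pp; simp [hdv]
  have sing : ∀ m : ℕ, ∀ (r : Fin 2), ∀ p ∈ 𝒢 r, ∀ q ∈ 𝒢 r, p.1 = q.1 →
      dv p q ≤ kbar ^ m * C1 := by
    intro m
    induction m with
    | zero =>
      intro r p hp q hq _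
      have hb1 := (hcoord p).2.1
      have hb2 := (hcoord p).2.2
      have hb3 := (hcoord q).2.1
      have hb4 := (hcoord q).2.2
      have hn1 := hRG r p hp
      have hn2 := hRG r q hq
      rw [pow_zero, one_mul, hC1]
      simp only [hdv]
      have l1 := abs_sub p.2.1 q.2.1
      have l2 := abs_sub p.2.2 q.2.2
      linarith
    | succ m ih =>
      intro r p hp q hq hx
      have hpow0 : (0:ℝ) ≤ kbar ^ (m + 1) * C1 := by positivity
      have key : ∀ (n n' : ℕ), 1 ≤ n → n ≤ Nn r → 1 ≤ n' → n' ≤ Nn r → n < n' →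
          ∀ p', p' ∈ 𝒢 (σf r n) → ∀ q', q' ∈ 𝒢 (σf r n') →
          (Wf r n p').1 = (Wf r n' q').1 → Wf r n p' = Wf r n' q' := by
        intro n n' hn1 hn2 hn1' hn2' hlt p' hp' q' hq' hxx
        have hp1 : p'.1 ∈ Pp (σf r n) := (hPmem _ _).mpr ⟨p', hp', rfl⟩
        have hq1 : q'.1 ∈ Pp (σf r n') := (hPmem _ _).mpr ⟨q', hq', rfl⟩
        rw [hproj] at hp1 hq1
        have hrp := hLxmem r n hn1 hn2 p'.1 hp1.1 hp1.2
        have hrq := hLxmem r n' hn1' hn2' q'.1 hq1.1 hq1.2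
        have e : Lx r n p'.1 = Lx r n' q'.1 := by rw [← hW1, ← hW1]; exact hxx
        have hknots : Xf r n ≤ Xf r (n' - 1) := hXle r n (n' - 1) (by omega) (by omega)
        have ht1 : Lx r n p'.1 = Xf r n := by linarith [hrp.2, hrq.1]
        have ht2 : Lx r n' q'.1 = Xf r (n' - 1) := by linarith [hrp.2, hrq.1]
        have hpe : p'.1 = Xf (σf r n) (Nn (σf r n)) :=
          hLxinj r n hn1 hn2 _ _ (by rw [ht1, (hAB r n hn1 hn2).2])
        have hqe : q'.1 = Xf (σf r n') 0 :=
          hLxinj r n' hn1' hn2' _ _ (by rw [ht2, (hAB r n' hn1' hn2').1])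
        have hp'' : p' = vR (σf r n) := hendR (σf r n) p' hp' hpe
        have hq'' : q' = vL (σf r n') := hendL (σf r n') q' hq' hqe
        have hnn : n = n' - 1 := by
          apply hXinj r n (n' - 1) (by omega) (by omega)
          rw [← ht1, ← ht2, e]
        rw [hp'', hq'', hJR r n hn1 hn2, hJL r n' hn1' hn2', ← hnn]
      obtain ⟨n, hn1, hn2, p', hp', rfl⟩ := hGfor r p hp
      obtain ⟨n', hn1', hn2', q', hq', rfl⟩ := hGfor r q hq
      rcases Nat.lt_trichotomy n n' with hlt | heq | hgt
      · have e := key n n' hn1 hn2 hn1' hn2' hlt p' hp' q' hq' hx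
        rw [e, hdvself]
        exact hpow0
      · subst heq
        have hx' : p'.1 = q'.1 := by
          apply hLxinj r n hn1 hn2
          rw [← hW1, ← hW1]; exact hx
        have hIH := ih (σf r n) p' hp' q' hq' hx'
        calc dv (Wf r n p') (Wf r n q') ≤ kbar * dv p' q' := hKC r n hn1 hn2 p' q' hx'
          _ ≤ kbar * (kbar ^ m * C1) := mul_le_mul_of_nonneg_left hIH hkbar_nn
          _ = kbar ^ (m + 1) * C1 := by ring
      · have e := key n' n hn1' hn2' hn1 hn2 hgt q' hq' p' hp' hx.symm
        rw [← e, hdvself]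
        exact hpow0
  have huniq : ∀ (r : Fin 2), ∀ p ∈ 𝒢 r, ∀ q ∈ 𝒢 r, p.1 = q.1 → p = q := by
    intro r p hp q hq hx
    have h0 : dv p q = 0 :=
      helper_squeeze _ C1 kbar (hdvnn _ _) hkbar_lt1 (fun m => sing m r p hp q hq hx)
    exact hdveq p q hx h0
  have hvLin : ∀ r, vL r ∈ 𝒢 r := by
    intro r
    have hx0 : Xf r 0 ∈ Pp r := by
      rw [hproj]; exact ⟨le_refl _, hXle r 0 (Nn r) (by omega) (le_refl _)⟩
    rw [hPmem] at hx0
    obtain ⟨p, hp, hpx⟩ := hx0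
    have h := hendL r p hp hpx
    rwa [← h]
  have hvRin : ∀ r, vR r ∈ 𝒢 r := by
    intro r
    have hx0 : Xf r (Nn r) ∈ Pp r := by
      rw [hproj]; exact ⟨hXle r 0 (Nn r) (by omega) (le_refl _), le_refl _⟩
    rw [hPmem] at hx0
    obtain ⟨p, hp, hpx⟩ := hx0
    have h := hendR r p hp hpx
    rwa [← h]
  have hknotin : ∀ (r : Fin 2) n, n ≤ Nn r → (Xf r n, Yf r n, Zf r n) ∈ 𝒢 r := by
    intro r n hn
    rcases Nat.eq_zero_or_pos n with rfl | hpos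
    · have h := hvLin r
      simp only [hvL] at h
      exact h
    · have hmem := hGback r n hpos hn (vR (σf r n)) (hvRin (σf r n))
      rwa [hJR r n hpos hn] at hmem
  -- construction of the functions
  have main : ∀ r : Fin 2, ∃ fr : ℝ → ℝ × ℝ,
      ContinuousOn fr (Icc (Xf r 0) (Xf r (Nn r))) ∧
      𝒢 r = (fun x => (x, fr x)) '' Icc (Xf r 0) (Xf r (Nn r)) ∧
      ∀ n, n ≤ Nn r → fr (Xf r n) = (Yf r n, Zf r n) := by
    intro r
    have hex : ∀ x : ℝ, ∃ p : ℝ × ℝ × ℝ, x ∈ Icc (Xf r 0) (Xf r (Nn r)) → p ∈ 𝒢 r ∧ p.1 = x := by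
      intro x
      by_cases hx : x ∈ Icc (Xf r 0) (Xf r (Nn r))
      · have hx' : x ∈ Pp r := by rw [hproj]; exact hx
        rw [hPmem] at hx'
        obtain ⟨p, hp, hpx⟩ := hx'
        exact ⟨p, fun _ => ⟨hp, hpx⟩⟩
      · exact ⟨(0, 0, 0), fun h => absurd h hx⟩
    choose g hg using hex
    set fr : ℝ → ℝ × ℝ := fun x => ((g x).2.1, (g x).2.2) with hfr
    have hgmem : ∀ x ∈ Icc (Xf r 0) (Xf r (Nn r)), g x ∈ 𝒢 r := fun x hx => (hg x hx).1
    have hgx : ∀ x ∈ Icc (Xf r 0) (Xf r (Nn r)), (g x).1 = x := fun x hx => (hg x hx).2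
    have huniq' : ∀ x ∈ Icc (Xf r 0) (Xf r (Nn r)), ∀ p ∈ 𝒢 r, p.1 = x → p = g x := by
      intro x hx p hp hpx
      exact huniq r p hp (g x) (hgmem x hx) (by rw [hpx, hgx x hx])
    have hgraph : 𝒢 r = (fun x => (x, fr x)) '' Icc (Xf r 0) (Xf r (Nn r)) := by
      apply Set.eq_of_subset_of_subset
      · intro p hp
        have hx : p.1 ∈ Icc (Xf r 0) (Xf r (Nn r)) := by
          rw [← hproj, hPmem]; exact ⟨p, hp, rfl⟩
        refine ⟨p.1, hx, ?_⟩
        have hpg := huniq' p.1 hx p hp rfl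
        show (p.1, fr p.1) = p
        rw [hfr]
        simp only
        rw [← hpg]
      · rintro _ ⟨x, hx, rfl⟩
        show (x, fr x) ∈ 𝒢 r
        have hgeq : (x, fr x) = g x := by
          rw [hfr]
          simp only
          exact Prod.ext (hgx x hx).symm rfl
        rw [hgeq]
        exact hgmem x hx
    have hIccC : IsCompact (Icc (Xf r 0) (Xf r (Nn r))) := isCompact_Icc
    haveI hCS : CompactSpace (𝒢 r) := isCompact_iff_compactSpace.mp (h𝒢c r)
    have hmemI : ∀ p : 𝒢 r, (p : ℝ × ℝ × ℝ).1 ∈ Icc (Xf r 0) (Xf r (Nn r)) := by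
      intro p
      rw [← hproj, hPmem]
      exact ⟨p, p.2, rfl⟩
    set π : 𝒢 r → Icc (Xf r 0) (Xf r (Nn r)) := fun p => ⟨(p : ℝ × ℝ × ℝ).1, hmemI p⟩ with hπ
    have hπc : Continuous π := by
      apply Continuous.subtype_mk
      exact continuous_fst.comp continuous_subtype_val
    have hπbij : Function.Bijective π := by
      constructor
      · intro p q hpq
        apply Subtype.ext
        apply huniq r p p.2 q q.2
        simpa [hπ, Subtype.ext_iff] using hpq
      · intro x
        refine ⟨⟨g x, hgmem x x.2⟩, ?_⟩
        apply Subtype.ext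
        simp only [hπ]
        exact hgx x x.2
    set homeo := Continuous.homeoOfEquivCompactToT2 (f := Equiv.ofBijective π hπbij) hπc with hhomeo
    have hrest : ∀ q : Icc (Xf r 0) (Xf r (Nn r)),
        fr q = ((homeo.symm q : ℝ × ℝ × ℝ).2.1, (homeo.symm q : ℝ × ℝ × ℝ).2.2) := by
      intro q
      have h1 : (homeo.symm q : ℝ × ℝ × ℝ).1 = (q : ℝ) :=
        congrArg Subtype.val (homeo.apply_symm_apply q)
      have h2 := huniq' (q : ℝ) q.2 (homeo.symm q : ℝ × ℝ × ℝ) (homeo.symm q).2 h1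
      rw [hfr]
      simp only
      rw [← h2]
    have hcont : ContinuousOn fr (Icc (Xf r 0) (Xf r (Nn r))) := by
      rw [continuousOn_iff_continuous_restrict]
      have hre : Set.restrict (Icc (Xf r 0) (Xf r (Nn r))) fr = fun q : Icc (Xf r 0) (Xf r (Nn r)) =>
          ((homeo.symm q : ℝ × ℝ × ℝ).2.1, (homeo.symm q : ℝ × ℝ × ℝ).2.2) :=
        funext fun q => hrest q
      change Continuous (Set.restrict (Icc (Xf r 0) (Xf r (Nn r))) fr)
      rw [hre]
      have hbase : Continuous fun q : Icc (Xf r 0) (Xf r (Nn r)) => (homeo.symm q : ℝ × ℝ × ℝ) :=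
        continuous_subtype_val.comp homeo.symm.continuous
      exact Continuous.prodMk hbase.snd.fst hbase.snd.snd
    have hinterp : ∀ n, n ≤ Nn r → fr (Xf r n) = (Yf r n, Zf r n) := by
      intro n hn
      have hxmem : Xf r n ∈ Icc (Xf r 0) (Xf r (Nn r)) :=
        ⟨hXle r 0 n (by omega) hn, hXle r n (Nn r) hn (le_refl _)⟩
      have hkp := hknotin r n hn
      have h2 := huniq' (Xf r n) hxmem (Xf r n, Yf r n, Zf r n) hkp rfl
      rw [hfr]
      simp only
      rw [← h2]
    exact ⟨fr, hcont, hgraph, hinterp⟩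
  obtain ⟨f1, hf1c, hf1g, hf1i⟩ := main 0
  obtain ⟨f2, hf2c, hf2g, hf2i⟩ := main 1
  refine ⟨f1, f2, ?_, ?_, ?_, ?_, ?_, ?_⟩
  · simp only [hNn0, hXf0] at hf1c; exact hf1c
  · simp only [hNn1, hXf1] at hf2c; exact hf2c
  · simp only [hNn0, hXf0, h𝒢0] at hf1g; exact hf1g
  · simp only [hNn1, hXf1, h𝒢1] at hf2g; exact hf2g
  · intro n hn
    have h := hf1i n (by rw [hNn0]; exact hn)
    simpa [hXf0, hYf0, hZf0] using h
  · intro n hn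
    have h := hf2i n (by rw [hNn1]; exact hn)
    simpa [hXf1, hYf1, hZf1] using h
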